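/- Let ρ_1 = diag(1/2, 1/2, 0) and ρ_2 = diag(1/2, 0, 1/2) in M_3 (commuting quantum states). There is no positive trace-preserving linear map T̃ : M_3 → M_2 with T̃(ρ_1) = [[1,0],[0,0]] and T̃(ρ_2) = [[0,0],[0,1]], even though the linear map determined by these two assignments is positive and trace-preserving on span{ρ_1, ρ_2}. -/

import Mathlib

open scoped Kronecker ComplexOrder Matrix.Norms.L2Operator
open Matrix Filter Classical

/-- `M_d`, the algebra of `d × d` complex matrices. -/
abbrev Mat (d : ℕ) := Matrix (Fin d) (Fin d) ℂ

/-- A linear map `T : S → M_{d'}` on a subspace `S ⊆ M_d` is completely positive if for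
every `n` and every positive semidefinite `P = Σ_j X_j ⊗ K_j` with `X_j ∈ S`, `K_j ∈ M_n`,
the matrix `(T ⊗ id_n)(P) = Σ_j T(X_j) ⊗ K_j` is positive semidefinite. -/
def IsCPOn {d d' : ℕ} (S : Submodule ℂ (Mat d)) (T : S →ₗ[ℂ] Mat d') : Prop :=
  ∀ (n m : ℕ) (X : Fin m → S) (K : Fin m → Matrix (Fin n) (Fin n) ℂ),
    (∑ j, (X j : Mat d) ⊗ₖ K j).PosSemidef →
    (∑ j, (T (X j)) ⊗ₖ K j).PosSemidef

/-- Complete positivity for a linear map defined on all of `M_d`. -/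
def IsCP {d d' : ℕ} (T : Mat d →ₗ[ℂ] Mat d') : Prop :=
  ∀ (n m : ℕ) (X : Fin m → Mat d) (K : Fin m → Matrix (Fin n) (Fin n) ℂ),
    (∑ j, X j ⊗ₖ K j).PosSemidef →
    (∑ j, T (X j) ⊗ₖ K j).PosSemidef

noncomputable def rho151 : Mat 3 := !![1/2, 0, 0; 0, 1/2, 0; 0, 0, 0]
noncomputable def rho152 : Mat 3 := !![1/2, 0, 0; 0, 0, 0; 0, 0, 1/2]
def psi0 : Mat 2 := !![1, 0; 0, 0]
def psi1 : Mat 2 := !![0, 0; 0, 1]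

/-- Diagonal entries of a positive semidefinite complex matrix are nonnegative. -/
lemma diag_nn15 {n : ℕ} {M : Matrix (Fin n) (Fin n) ℂ} (h : M.PosSemidef) (i : Fin n) :
    0 ≤ M i i := by
  exact h.diag_nonneg

lemma half_nn15 {x : ℂ} (h : 0 ≤ x * 2⁻¹) : 0 ≤ x := by
  have h2 := mul_le_mul_of_nonneg_right h (show (0:ℂ) ≤ 2 by rw [Complex.le_def]; norm_num)
  simpa [mul_assoc] using h2

lemma half_zero15 {x : ℂ} (hle : 2⁻¹ * x ≤ 0) (hge : 0 ≤ x) : x = 0 := by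
  have h2 := mul_le_mul_of_nonneg_left hle (show (0:ℂ) ≤ 2 by rw [Complex.le_def]; norm_num)
  simp at h2
  exact le_antisymm h2 hge

/-- The map `ρ_1 ↦ |0⟩⟨0|`, `ρ_2 ↦ |1⟩⟨1|` is positive and trace-preserving on
`span{ρ_1, ρ_2}` but has no positive trace-preserving extension `M_3 → M_2`. -/
theorem stmt15 :
    (∀ a b : ℂ, (a • rho151 + b • rho152).PosSemidef → (a • psi0 + b • psi1).PosSemidef) ∧
    (∀ a b : ℂ, (a • rho151 + b • rho152).trace = (a • psi0 + b • psi1).trace) ∧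
    ¬ ∃ T : Mat 3 →ₗ[ℂ] Mat 2,
        (∀ A : Mat 3, A.PosSemidef → (T A).PosSemidef) ∧
        (∀ X : Mat 3, (T X).trace = X.trace) ∧
        T rho151 = psi0 ∧ T rho152 = psi1 := by
  refine ⟨?_, ?_, ?_⟩
  · intro a b h
    have ha := diag_nn15 h 1
    have hb := diag_nn15 h 2
    simp [rho151, rho152, Matrix.vecHead, Matrix.vecTail] at ha hb
    have ha' : 0 ≤ a := half_nn15 (by simpa [one_div] using ha)
    have hb' : 0 ≤ b := half_nn15 (by simpa [one_div] using hb)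
    have hd : a • psi0 + b • psi1 = diagonal ![a, b] := by
      ext i j; fin_cases i <;> fin_cases j <;>
        simp [psi0, psi1, diagonal, Matrix.vecHead, Matrix.vecTail]
    rw [hd]
    exact PosSemidef.diagonal (by intro i; fin_cases i <;> simpa)
  · intro a b
    simp [rho151, rho152, psi0, psi1, Matrix.trace, Matrix.diag,
      Fin.sum_univ_three, Fin.sum_univ_two, Matrix.vecHead, Matrix.vecTail]
    ring
  · rintro ⟨T, hpos, htr, h1, h2⟩
    set E : Mat 3 := !![1, 0, 0; 0, 0, 0; 0, 0, 0] with hE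
    have hhalf : (0:ℂ) ≤ 1/2 := by rw [Complex.le_def]; norm_num
    have hEps : E.PosSemidef := by
      have : E = diagonal ![1, 0, 0] := by
        ext i j; fin_cases i <;> fin_cases j <;>
          simp [hE, diagonal, Matrix.vecHead, Matrix.vecTail]
      rw [this]
      refine PosSemidef.diagonal ?_
      intro i; fin_cases i <;> simp
    have hr1 : (rho151 - (1/2 : ℂ) • E).PosSemidef := by
      have : rho151 - (1/2 : ℂ) • E = diagonal ![0, 1/2, 0] := by
        ext i j; fin_cases i <;> fin_cases j <;>
          simp [hE, rho151, diagonal, Matrix.vecHead, Matrix.vecTail]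
      rw [this]
      refine PosSemidef.diagonal ?_
      intro i; fin_cases i <;> simpa using hhalf
    have hr2 : (rho152 - (1/2 : ℂ) • E).PosSemidef := by
      have : rho152 - (1/2 : ℂ) • E = diagonal ![0, 0, 1/2] := by
        ext i j; fin_cases i <;> fin_cases j <;>
          simp [hE, rho152, diagonal, Matrix.vecHead, Matrix.vecTail]
      rw [this]
      refine PosSemidef.diagonal ?_
      intro i; fin_cases i <;> simpa using hhalf
    have hT1 : (psi0 - (1/2 : ℂ) • T E).PosSemidef := by
      have := hpos _ hr1
      rwa [map_sub, LinearMap.map_smul, h1] at this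
    have hT2 : (psi1 - (1/2 : ℂ) • T E).PosSemidef := by
      have := hpos _ hr2
      rwa [map_sub, LinearMap.map_smul, h2] at this
    have hTE := hpos _ hEps
    have h11 : T E 1 1 = 0 := by
      have hle := diag_nn15 hT1 1
      simp [psi0, Matrix.sub_apply, Matrix.smul_apply, Matrix.vecHead, Matrix.vecTail] at hle
      exact half_zero15 (by simpa [one_div] using hle) (diag_nn15 hTE 1)
    have h00 : T E 0 0 = 0 := by
      have hle := diag_nn15 hT2 0
      simp [psi1, Matrix.sub_apply, Matrix.smul_apply, Matrix.vecHead, Matrix.vecTail] at hle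
      exact half_zero15 (by simpa [one_div] using hle) (diag_nn15 hTE 0)
    have htrE := htr E
    rw [Matrix.trace] at htrE
    rw [hE] at h00 h11
    simp [Fin.sum_univ_two, Fin.sum_univ_three, Matrix.diag, h00, h11, hE,
      Matrix.trace, Matrix.vecHead, Matrix.vecTail] at htrE
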